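/- Let d ≥ 1 be an integer, let p ≥ d be a real number, and let λ > p/d. Define u on the ball B_{1/e} ⊆ ℝ^d by u(x) = (ln λ)^{-1} ln ln (1/|x|). Then u ∈ L^1(B_{1/e}), u is essentially unbounded on B_{1/e} (u ∉ L^∞(B_{1/e})), and I_{1,p}(u, B_{1/e}) < +∞. -/

import Mathlib

open MeasureTheory Real Filter ENNReal

/-- Finiteness of the integral of `‖y‖ ^ s` over a ball, for `s > -d`. -/
lemma lint_rpow_ball (d : ℕ) (hd : 1 ≤ d) {s R : ℝ} (hs : -(d : ℝ) < s) (hR : 0 < R) :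
    ∫⁻ y in Metric.ball (0 : EuclideanSpace ℝ (Fin d)) R, ENNReal.ofReal (‖y‖ ^ s) < ⊤ := by
  haveI : Nontrivial (EuclideanSpace ℝ (Fin d)) :=
    Module.nontrivial_of_finrank_pos (R := ℝ)
      (by rw [finrank_euclideanSpace_fin]; exact hd)
  rcases le_or_gt 0 s with hs0 | hs0
  · calc ∫⁻ y in Metric.ball (0 : EuclideanSpace ℝ (Fin d)) R, ENNReal.ofReal (‖y‖ ^ s)
        ≤ ∫⁻ _ in Metric.ball (0 : EuclideanSpace ℝ (Fin d)) R, ENNReal.ofReal (R ^ s) := by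
          refine setLIntegral_mono' measurableSet_ball fun y hy => ?_
          exact ENNReal.ofReal_le_ofReal
            (Real.rpow_le_rpow (norm_nonneg _) (mem_ball_zero_iff.1 hy).le hs0)
      _ = ENNReal.ofReal (R ^ s) * volume (Metric.ball (0 : EuclideanSpace ℝ (Fin d)) R) :=
          setLIntegral_const _ _
      _ < ⊤ := ENNReal.mul_lt_top ofReal_lt_top measure_ball_lt_top
  · set E := EuclideanSpace ℝ (Fin d)
    set A : ℕ → Set E := fun n => Metric.closedBall 0 (R / 2 ^ n) \ Metric.ball 0 (R / 2 ^ (n + 1))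
      with hA
    have h2 : (0 : ℝ) < 2 := two_pos
    have hsub : Metric.ball (0 : E) R ⊆ {0} ∪ ⋃ n, A n := by
      intro y hy
      rw [mem_ball_zero_iff] at hy
      rcases eq_or_ne y 0 with rfl | hy0
      · exact Or.inl rfl
      · have hy0' : 0 < ‖y‖ := norm_pos_iff.mpr hy0
        have h1 : 1 ≤ R / ‖y‖ := by
          rw [le_div_iff₀ hy0']; linarith
        obtain ⟨n, hn1, hn2⟩ := exists_nat_pow_near h1 one_lt_two
        refine Or.inr (Set.mem_iUnion.2 ⟨n, ?_, ?_⟩)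
        · rw [Metric.mem_closedBall, dist_zero_right]
          rw [le_div_iff₀ hy0'] at hn1
          rw [le_div_iff₀ (pow_pos h2 n)]
          linarith [hn1]
        · rw [Metric.mem_ball, dist_zero_right]
          rw [div_lt_iff₀ hy0'] at hn2
          rw [not_lt, div_le_iff₀ (pow_pos h2 (n + 1))]
          linarith [hn2]
    have hpos : ∀ m : ℕ, (0 : ℝ) < R / 2 ^ m := fun m => div_pos hR (pow_pos h2 m)
    set D : ℝ≥0∞ := ENNReal.ofReal (R ^ (s + d) * 2 ^ (-s)) *
      volume (Metric.ball (0 : E) 1) with hD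
    set r : ℝ≥0∞ := ENNReal.ofReal ((2 : ℝ) ^ (-(s + d))) with hr
    have hkey : ∀ n : ℕ, (R / 2 ^ (n + 1)) ^ s * (R / 2 ^ n) ^ (d : ℕ) =
        R ^ (s + (d : ℝ)) * (2 : ℝ) ^ (-s) * ((2 : ℝ) ^ (-(s + (d : ℝ)))) ^ n := by
      intro n
      have hlog : ∀ m : ℕ, Real.log (R / 2 ^ m) = Real.log R - m * Real.log 2 := by
        intro m
        rw [Real.log_div hR.ne' (pow_pos h2 m).ne', Real.log_pow]
      rw [← Real.rpow_natCast (R / 2 ^ n) d,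
        Real.rpow_def_of_pos (hpos (n + 1)), Real.rpow_def_of_pos (hpos n),
        Real.rpow_def_of_pos hR, Real.rpow_def_of_pos h2, Real.rpow_def_of_pos h2,
        ← Real.exp_nat_mul, ← Real.exp_add, ← Real.exp_add, ← Real.exp_add,
        Real.exp_eq_exp, hlog, hlog]
      push_cast
      ring
    have hAle : ∀ n : ℕ, (∫⁻ y in A n, ENNReal.ofReal (‖y‖ ^ s)) ≤ D * r ^ n := by
      intro n
      have hmeas : MeasurableSet (A n) :=
        measurableSet_closedBall.diff measurableSet_ball
      calc (∫⁻ y in A n, ENNReal.ofReal (‖y‖ ^ s))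
          ≤ ∫⁻ _ in A n, ENNReal.ofReal ((R / 2 ^ (n + 1)) ^ s) := by
            refine setLIntegral_mono' hmeas fun y hy => ?_
            refine ENNReal.ofReal_le_ofReal ?_
            have h1 : R / 2 ^ (n + 1) ≤ ‖y‖ := by
              have := hy.2
              rw [Metric.mem_ball, dist_zero_right, not_lt] at this
              exact this
            exact Real.rpow_le_rpow_of_nonpos (hpos (n + 1)) h1 hs0.le
        _ = ENNReal.ofReal ((R / 2 ^ (n + 1)) ^ s) * volume (A n) := setLIntegral_const _ _
        _ ≤ ENNReal.ofReal ((R / 2 ^ (n + 1)) ^ s) *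
            (ENNReal.ofReal ((R / 2 ^ n) ^ (d : ℕ)) * volume (Metric.ball (0 : E) 1)) := by
            refine mul_le_mul_right ?_ _
            have := MeasureTheory.Measure.addHaar_closedBall (μ := (volume : Measure E)) 0
              (hpos n).le
            rw [finrank_euclideanSpace_fin] at this
            calc volume (A n) ≤ volume (Metric.closedBall (0 : E) (R / 2 ^ n)) :=
                  measure_mono Set.diff_subset
              _ = ENNReal.ofReal ((R / 2 ^ n) ^ (d : ℕ)) * volume (Metric.ball (0 : E) 1) := this
        _ = D * r ^ n := by
            rw [hD, hr, ← mul_assoc,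
              ← ENNReal.ofReal_mul (by positivity : (0:ℝ) ≤ (R / 2 ^ (n + 1)) ^ s), hkey n,
              ENNReal.ofReal_mul (by positivity), ENNReal.ofReal_pow (by positivity)]
            ring
    calc ∫⁻ y in Metric.ball (0 : E) R, ENNReal.ofReal (‖y‖ ^ s)
        ≤ ∫⁻ y in ({0} ∪ ⋃ n, A n : Set E), ENNReal.ofReal (‖y‖ ^ s) := lintegral_mono_set hsub
      _ ≤ (∫⁻ y in ({0} : Set E), ENNReal.ofReal (‖y‖ ^ s)) +
          ∫⁻ y in (⋃ n, A n : Set E), ENNReal.ofReal (‖y‖ ^ s) := lintegral_union_le _ _ _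
      _ ≤ 0 + ∑' n, ∫⁻ y in A n, ENNReal.ofReal (‖y‖ ^ s) := by
          refine add_le_add ?_ (lintegral_iUnion_le _ _)
          rw [setLIntegral_measure_zero _ _ (measure_singleton 0)]
      _ ≤ 0 + ∑' n, D * r ^ n := by
          refine add_le_add le_rfl (ENNReal.tsum_le_tsum hAle)
      _ = D * (1 - r)⁻¹ := by rw [zero_add, ENNReal.tsum_mul_left, ENNReal.tsum_geometric]
      _ < ⊤ := by
          refine ENNReal.mul_lt_top (ENNReal.mul_lt_top ofReal_lt_top measure_ball_lt_top) ?_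
          rw [ENNReal.inv_lt_top]
          refine tsub_pos_of_lt ?_
          rw [hr, ← ENNReal.ofReal_one]
          exact ENNReal.ofReal_lt_ofReal_iff_of_nonneg (by positivity) |>.2
            (Real.rpow_lt_one_of_one_lt_of_neg one_lt_two (by linarith))


noncomputable def Faux (d : ℕ) (p : ℝ) (x y : EuclideanSpace ℝ (Fin d)) : ℝ≥0∞ :=
  ENNReal.ofReal ((1 : ℝ) ^ p / ‖x - y‖ ^ ((d : ℝ) + p))

noncomputable def Gaux (d : ℕ) (p lam : ℝ) (x y : EuclideanSpace ℝ (Fin d)) : ℝ≥0∞ :=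
  if ‖x‖ < ‖y‖ ^ lam then Faux d p x y else 0

lemma Faux_symm (d : ℕ) (p : ℝ) (x y : EuclideanSpace ℝ (Fin d)) :
    Faux d p x y = Faux d p y x := by
  unfold Faux; rw [norm_sub_rev]

lemma measurable_uncurry_Gaux (d : ℕ) (p lam : ℝ) :
    Measurable (Function.uncurry (Gaux d p lam)) := by
  have hF : Measurable (Function.uncurry (Faux d p)) := by
    refine Measurable.ennreal_ofReal ?_
    exact measurable_const.div (((measurable_fst.sub measurable_snd).norm).pow measurable_const)
  show Measurable fun q : EuclideanSpace ℝ (Fin d) × EuclideanSpace ℝ (Fin d) =>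
    if ‖q.1‖ < ‖q.2‖ ^ lam then Faux d p q.1 q.2 else 0
  exact Measurable.ite
    (measurableSet_lt measurable_fst.norm (measurable_snd.norm.pow measurable_const)) hF measurable_const


noncomputable def nlI (d : ℕ) (p δ : ℝ) (u : EuclideanSpace ℝ (Fin d) → ℝ)
    (O : Set (EuclideanSpace ℝ (Fin d))) : ℝ≥0∞ :=
  ∫⁻ x in O, ∫⁻ y in O,
    (if δ < |u x - u y| then ENNReal.ofReal (δ ^ p / ‖x - y‖ ^ ((d : ℝ) + p)) else 0)

set_option maxHeartbeats 1000000 in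
/-- an unbounded function with finite nonlocal energy. -/
theorem stmt14 (d : ℕ) (hd : 1 ≤ d) (p : ℝ) (hp : (d : ℝ) ≤ p) (lam : ℝ) (hlam : p / d < lam) :
    IntegrableOn
        (fun x : EuclideanSpace ℝ (Fin d) =>
          (Real.log lam)⁻¹ * Real.log (Real.log (1 / ‖x‖)))
        (Metric.ball 0 (1 / Real.exp 1)) ∧
    (∀ C : ℝ,
      ¬ (∀ᵐ x ∂(volume.restrict (Metric.ball (0 : EuclideanSpace ℝ (Fin d)) (1 / Real.exp 1))),
          |(Real.log lam)⁻¹ * Real.log (Real.log (1 / ‖x‖))| ≤ C)) ∧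
    nlI d p 1 (fun x => (Real.log lam)⁻¹ * Real.log (Real.log (1 / ‖x‖)))
        (Metric.ball 0 (1 / Real.exp 1)) < ⊤ := by
  have hd0 : (0 : ℝ) < d := by exact_mod_cast hd
  have hd1 : (1 : ℝ) ≤ d := by exact_mod_cast hd
  have hp1 : (1 : ℝ) ≤ p := le_trans hd1 hp
  have hlam1 : 1 < lam := lt_of_le_of_lt ((one_le_div hd0).2 hp) hlam
  have hloglam : 0 < Real.log lam := Real.log_pos hlam1
  have hRpos : 0 < 1 / Real.exp 1 := by positivity
  haveI : Nontrivial (EuclideanSpace ℝ (Fin d)) :=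
    Module.nontrivial_of_finrank_pos (R := ℝ)
      (by rw [finrank_euclideanSpace_fin]; exact hd)
  -- basic fact : on the punctured ball, log (1/‖x‖) > 1
  have hlog1 : ∀ x : EuclideanSpace ℝ (Fin d), x ≠ 0 → ‖x‖ < 1 / Real.exp 1 →
      1 < Real.log (1 / ‖x‖) := by
    intro x hx0 hx
    have hx0' : 0 < ‖x‖ := norm_pos_iff.mpr hx0
    have h1 : ‖x‖ < Real.exp (-1) := by rwa [Real.exp_neg, ← one_div]
    have h2 : Real.log ‖x‖ < -1 := (Real.log_lt_iff_lt_exp hx0').2 h1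
    rw [one_div, Real.log_inv]; linarith
  refine ⟨?_, ?_, ?_⟩
  · -- Part 1 : integrability
    have hgmeas : Measurable fun x : EuclideanSpace ℝ (Fin d) =>
        Real.log (Real.log (1 / ‖x‖)) :=
      Real.measurable_log.comp (Real.measurable_log.comp (measurable_const.div measurable_norm))
    have hbound : ∀ x : EuclideanSpace ℝ (Fin d), ‖x‖ < 1 / Real.exp 1 →
        |Real.log (Real.log (1 / ‖x‖))| ≤ 2 * ‖x‖ ^ (-(2 : ℝ)⁻¹) := by
      intro x hx
      rcases eq_or_ne x 0 with rfl | hx0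
      · simp [Real.zero_rpow (by norm_num : (-(2 : ℝ)⁻¹) ≠ 0)]
      · have hx0' : 0 < ‖x‖ := norm_pos_iff.mpr hx0
        have ha : 1 < Real.log (1 / ‖x‖) := hlog1 x hx0 hx
        have hb : (0 : ℝ) < ‖x‖ ^ (-(2 : ℝ)⁻¹) := Real.rpow_pos_of_pos hx0' _
        have h1 : Real.log (Real.log (1 / ‖x‖)) ≤ Real.log (1 / ‖x‖) :=
          (Real.log_le_sub_one_of_pos (by linarith)).trans (by linarith)
        have hlb : Real.log (‖x‖ ^ (-(2 : ℝ)⁻¹)) ≤ ‖x‖ ^ (-(2 : ℝ)⁻¹) :=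
          (Real.log_le_sub_one_of_pos hb).trans (by linarith)
        rw [Real.log_rpow hx0'] at hlb
        have h2 : Real.log (1 / ‖x‖) ≤ 2 * ‖x‖ ^ (-(2 : ℝ)⁻¹) := by
          rw [one_div, Real.log_inv]
          linarith
        have h0 : 0 ≤ Real.log (Real.log (1 / ‖x‖)) := Real.log_nonneg ha.le
        rw [abs_of_nonneg h0]
        linarith
    refine ⟨((hgmeas.const_mul _).aestronglyMeasurable), ?_⟩
    rw [hasFiniteIntegral_iff_norm]
    calc ∫⁻ x in Metric.ball (0 : EuclideanSpace ℝ (Fin d)) (1 / Real.exp 1),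
          ENNReal.ofReal ‖(Real.log lam)⁻¹ * Real.log (Real.log (1 / ‖x‖))‖
        ≤ ∫⁻ x in Metric.ball (0 : EuclideanSpace ℝ (Fin d)) (1 / Real.exp 1),
          ENNReal.ofReal (2 * |(Real.log lam)⁻¹|) * ENNReal.ofReal (‖x‖ ^ (-(2 : ℝ)⁻¹)) := by
          refine setLIntegral_mono' measurableSet_ball fun x hx => ?_
          rw [← ENNReal.ofReal_mul (by positivity)]
          refine ENNReal.ofReal_le_ofReal ?_
          rw [Real.norm_eq_abs, abs_mul]
          calc |(Real.log lam)⁻¹| * |Real.log (Real.log (1 / ‖x‖))|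
              ≤ |(Real.log lam)⁻¹| * (2 * ‖x‖ ^ (-(2 : ℝ)⁻¹)) :=
                mul_le_mul_of_nonneg_left (hbound x (mem_ball_zero_iff.1 hx)) (abs_nonneg _)
            _ = 2 * |(Real.log lam)⁻¹| * ‖x‖ ^ (-(2 : ℝ)⁻¹) := by ring
      _ = ENNReal.ofReal (2 * |(Real.log lam)⁻¹|) *
          ∫⁻ x in Metric.ball (0 : EuclideanSpace ℝ (Fin d)) (1 / Real.exp 1),
            ENNReal.ofReal (‖x‖ ^ (-(2 : ℝ)⁻¹)) := lintegral_const_mul' _ _ ofReal_ne_top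
      _ < ⊤ := ENNReal.mul_lt_top ofReal_lt_top
          (lint_rpow_ball d hd (by linarith : -(d : ℝ) < -(2 : ℝ)⁻¹) hRpos)
  · -- Part 2 : essential unboundedness
    intro C hC
    set ε := min (1 / Real.exp 1) (Real.exp (-Real.exp ((|C| + 1) * Real.log lam))) with hε
    have hεpos : 0 < ε := lt_min hRpos (Real.exp_pos _)
    have hclaim : ∀ x : EuclideanSpace ℝ (Fin d), x ≠ 0 → ‖x‖ < ε →
        C < |(Real.log lam)⁻¹ * Real.log (Real.log (1 / ‖x‖))| := by
      intro x hx0 hxε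
      have hx0' : 0 < ‖x‖ := norm_pos_iff.mpr hx0
      have h1 : ‖x‖ < Real.exp (-Real.exp ((|C| + 1) * Real.log lam)) :=
        lt_of_lt_of_le hxε (min_le_right _ _)
      have h2 : Real.log ‖x‖ < -Real.exp ((|C| + 1) * Real.log lam) :=
        (Real.log_lt_iff_lt_exp hx0').2 h1
      have h3 : Real.exp ((|C| + 1) * Real.log lam) < Real.log (1 / ‖x‖) := by
        rw [one_div, Real.log_inv]; linarith
      have h4 : (|C| + 1) * Real.log lam < Real.log (Real.log (1 / ‖x‖)) :=
        (Real.lt_log_iff_exp_lt (lt_trans (Real.exp_pos _) h3)).2 h3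
      have h5 := mul_lt_mul_of_pos_left h4 (inv_pos.2 hloglam)
      have h6 : (Real.log lam)⁻¹ * ((|C| + 1) * Real.log lam) = |C| + 1 := by
        field_simp
      rw [h6] at h5
      have h7 := le_abs_self ((Real.log lam)⁻¹ * Real.log (Real.log (1 / ‖x‖)))
      have h8 := le_abs_self C
      linarith
    have hT : Metric.ball (0 : EuclideanSpace ℝ (Fin d)) ε \ {0} ⊆
        {x | ¬ |(Real.log lam)⁻¹ * Real.log (Real.log (1 / ‖x‖))| ≤ C} := by
      intro x hx
      exact not_le.2 (hclaim x (by simpa using hx.2) (mem_ball_zero_iff.1 hx.1))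
    have hmono : (volume.restrict
        (Metric.ball (0 : EuclideanSpace ℝ (Fin d)) (1 / Real.exp 1)))
        (Metric.ball (0 : EuclideanSpace ℝ (Fin d)) ε \ {0}) = 0 :=
      measure_mono_null hT (ae_iff.1 hC)
    rw [Measure.restrict_apply' measurableSet_ball,
      Set.inter_eq_self_of_subset_left
        (Set.diff_subset.trans (Metric.ball_subset_ball (min_le_left _ _))),
      measure_diff_null (measure_singleton _)] at hmono
    exact (Metric.measure_ball_pos volume 0 hεpos).ne' hmono
  · -- Part 3 : finiteness of the nonlocal energy
    set u : EuclideanSpace ℝ (Fin d) → ℝ :=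
      fun x => (Real.log lam)⁻¹ * Real.log (Real.log (1 / ‖x‖)) with hu
    set B := Metric.ball (0 : EuclideanSpace ℝ (Fin d)) (1 / Real.exp 1) with hB
    have key : ∀ x y : EuclideanSpace ℝ (Fin d), ‖x‖ < 1 / Real.exp 1 → ‖y‖ < 1 / Real.exp 1 →
        1 < u x - u y → ‖x‖ < ‖y‖ ^ lam ∨ ‖y‖ < ‖x‖ ^ lam := by
      intro x y hx hy h
      have h' : 1 < (Real.log lam)⁻¹ *
          (Real.log (Real.log (1 / ‖x‖)) - Real.log (Real.log (1 / ‖y‖))) := by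
        rw [mul_sub]; exact h
      have hgt : Real.log lam <
          Real.log (Real.log (1 / ‖x‖)) - Real.log (Real.log (1 / ‖y‖)) := by
        have h2 := mul_lt_mul_of_pos_left h' hloglam
        rwa [mul_one, ← mul_assoc, mul_inv_cancel₀ hloglam.ne', one_mul] at h2
      rcases eq_or_ne x 0 with rfl | hx0
      · exfalso
        have hgx : Real.log (Real.log (1 / ‖(0 : EuclideanSpace ℝ (Fin d))‖)) = 0 := by simp
        rw [hgx] at hgt
        rcases eq_or_ne y 0 with rfl | hy0
        · rw [hgx] at hgt; linarith
        · have := Real.log_pos (hlog1 y hy0 hy); linarith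
      rcases eq_or_ne y 0 with rfl | hy0
      · right; rw [norm_zero]; exact Real.rpow_pos_of_pos (norm_pos_iff.mpr hx0) lam
      · left
        have hx0' : 0 < ‖x‖ := norm_pos_iff.mpr hx0
        have hy0' : 0 < ‖y‖ := norm_pos_iff.mpr hy0
        have hax : 1 < Real.log (1 / ‖x‖) := hlog1 x hx0 hx
        have hay : 1 < Real.log (1 / ‖y‖) := hlog1 y hy0 hy
        have h2 : Real.log (lam * Real.log (1 / ‖y‖)) < Real.log (Real.log (1 / ‖x‖)) := by
          rw [Real.log_mul (by positivity) (by linarith)]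
          linarith
        have h3 : lam * Real.log (1 / ‖y‖) < Real.log (1 / ‖x‖) :=
          (Real.log_lt_log_iff (by positivity) (by linarith)).1 h2
        have h4 : Real.log ‖x‖ < Real.log (‖y‖ ^ lam) := by
          rw [Real.log_rpow hy0']
          rw [one_div, Real.log_inv, one_div, Real.log_inv] at h3
          nlinarith [h3]
        calc ‖x‖ = Real.exp (Real.log ‖x‖) := (Real.exp_log hx0').symm
          _ < Real.exp (Real.log (‖y‖ ^ lam)) := Real.exp_lt_exp.2 h4
          _ = ‖y‖ ^ lam := Real.exp_log (Real.rpow_pos_of_pos hy0' lam)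
    have hpt : ∀ x ∈ B, ∀ y ∈ B,
        (if (1 : ℝ) < |u x - u y| then Faux d p x y else 0) ≤
          Gaux d p lam x y + Gaux d p lam y x := by
      intro x hx y hy
      split_ifs with hcond
      · rcases lt_abs.1 hcond with h1 | h1
        · rcases key x y (mem_ball_zero_iff.1 hx) (mem_ball_zero_iff.1 hy) h1 with hk | hk
          · have hGeq : Gaux d p lam x y = Faux d p x y := by
              unfold Gaux; rw [if_pos hk]
            rw [← hGeq]; exact le_self_add
          · have hGeq : Gaux d p lam y x = Faux d p x y := by
              unfold Gaux; rw [if_pos hk]; exact Faux_symm d p y x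
            rw [← hGeq]; exact le_add_self
        · have h1' : 1 < u y - u x := by rw [← neg_sub]; exact h1
          rcases key y x (mem_ball_zero_iff.1 hy) (mem_ball_zero_iff.1 hx) h1' with hk | hk
          · have hGeq : Gaux d p lam y x = Faux d p x y := by
              unfold Gaux; rw [if_pos hk]; exact Faux_symm d p y x
            rw [← hGeq]; exact le_add_self
          · have hGeq : Gaux d p lam x y = Faux d p x y := by
              unfold Gaux; rw [if_pos hk]
            rw [← hGeq]; exact le_self_add
      · exact zero_le
    have hGm := measurable_uncurry_Gaux d p lam
    have hGm1 : ∀ x, Measurable fun y => Gaux d p lam x y := by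
      intro x
      unfold Gaux Faux
      refine Measurable.ite
        (measurableSet_lt measurable_const (measurable_norm.pow measurable_const)) ?_
        measurable_const
      refine Measurable.ennreal_ofReal ?_
      exact measurable_const.div (((measurable_const.sub measurable_id).norm).pow measurable_const)
    have step1 : nlI d p 1 u B ≤
        (∫⁻ x in B, ∫⁻ y in B, Gaux d p lam x y) +
          ∫⁻ x in B, ∫⁻ y in B, Gaux d p lam y x := by
      calc nlI d p 1 u B
          ≤ ∫⁻ x in B, ∫⁻ y in B, (Gaux d p lam x y + Gaux d p lam y x) := by
            refine setLIntegral_mono' measurableSet_ball fun x hx => ?_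
            refine setLIntegral_mono' measurableSet_ball fun y hy => ?_
            exact hpt x hx y hy
        _ = ∫⁻ x in B, ((∫⁻ y in B, Gaux d p lam x y) + ∫⁻ y in B, Gaux d p lam y x) :=
            lintegral_congr fun x => lintegral_add_left (hGm1 x) _
        _ = _ := lintegral_add_left (Measurable.lintegral_prod_right hGm) _
    have step2 : (∫⁻ x in B, ∫⁻ y in B, Gaux d p lam x y) =
        ∫⁻ y in B, ∫⁻ x in B, Gaux d p lam x y :=
      lintegral_lintegral_swap hGm.aemeasurable
    have hs : -(d : ℝ) < lam * (d : ℝ) - ((d : ℝ) + p) := by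
      have hpd : p < lam * d := by rwa [div_lt_iff₀ hd0] at hlam
      linarith
    set c0 := 1 - Real.exp (1 - lam) with hc0def
    have hc0 : 0 < c0 := by
      have : Real.exp (1 - lam) < 1 := Real.exp_lt_one_iff.2 (by linarith)
      rw [hc0def]; linarith
    set K : ℝ≥0∞ := ENNReal.ofReal (c0 ^ (-((d : ℝ) + p))) *
      volume (Metric.ball (0 : EuclideanSpace ℝ (Fin d)) 1) with hK
    have hinner : ∀ y ∈ B, (∫⁻ x in B, Gaux d p lam x y) ≤
        K * ENNReal.ofReal (‖y‖ ^ (lam * (d : ℝ) - ((d : ℝ) + p))) := by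
      intro y hy
      rcases eq_or_ne y 0 with rfl | hy0
      · have hz : ∀ x : EuclideanSpace ℝ (Fin d), Gaux d p lam x 0 = 0 := by
          intro x
          unfold Gaux
          rw [if_neg]
          rw [norm_zero, Real.zero_rpow (by linarith : lam ≠ 0)]
          exact not_lt.2 (norm_nonneg _)
        simp only [hz]
        simp
      · have hy0' : 0 < ‖y‖ := norm_pos_iff.mpr hy0
        have hyb : ‖y‖ < 1 / Real.exp 1 := mem_ball_zero_iff.1 hy
        have hdp : (0 : ℝ) < (d : ℝ) + p := by linarith
        have hcy : 0 < c0 * ‖y‖ := mul_pos hc0 hy0'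
        have hdist : ∀ x : EuclideanSpace ℝ (Fin d), ‖x‖ < ‖y‖ ^ lam →
            c0 * ‖y‖ ≤ ‖x - y‖ := by
          intro x hxy
          have h1 : ‖y‖ ^ (lam - 1) ≤ Real.exp (1 - lam) := by
            have hyle : ‖y‖ ≤ (Real.exp 1)⁻¹ := by rw [← one_div]; linarith
            calc ‖y‖ ^ (lam - 1) ≤ ((Real.exp 1)⁻¹) ^ (lam - 1) :=
                Real.rpow_le_rpow (norm_nonneg _) hyle (by linarith)
              _ = Real.exp (1 - lam) := by
                rw [Real.inv_rpow (Real.exp_pos 1).le, Real.exp_one_rpow,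
                  ← Real.exp_neg, neg_sub]
          have h2 : ‖y‖ ^ lam ≤ Real.exp (1 - lam) * ‖y‖ := by
            have he : ‖y‖ ^ lam = ‖y‖ ^ (lam - 1) * ‖y‖ := by
              have h := Real.rpow_add hy0' (lam - 1) 1
              rw [sub_add_cancel] at h
              rw [h, Real.rpow_one]
            rw [he]
            exact mul_le_mul_of_nonneg_right h1 hy0'.le
          have h3 : ‖x‖ ≤ Real.exp (1 - lam) * ‖y‖ := le_trans hxy.le h2
          have h4 : c0 * ‖y‖ ≤ ‖y‖ - ‖x‖ := by
            have he : c0 * ‖y‖ = ‖y‖ - Real.exp (1 - lam) * ‖y‖ := by rw [hc0def]; ring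
            rw [he]; linarith
          calc c0 * ‖y‖ ≤ ‖y‖ - ‖x‖ := h4
            _ ≤ ‖y - x‖ := norm_sub_norm_le y x
            _ = ‖x - y‖ := norm_sub_rev y x
        set Cst : ℝ≥0∞ := ENNReal.ofReal ((1 : ℝ) ^ p / (c0 * ‖y‖) ^ ((d : ℝ) + p)) with hCst
        have hptw : ∀ x : EuclideanSpace ℝ (Fin d), Gaux d p lam x y ≤
            (Metric.ball (0 : EuclideanSpace ℝ (Fin d)) (‖y‖ ^ lam)).indicator
              (fun _ => Cst) x := by
          intro x
          unfold Gaux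
          split_ifs with hxy
          · rw [Set.indicator_of_mem (mem_ball_zero_iff.2 hxy)]
            unfold Faux
            refine ENNReal.ofReal_le_ofReal ?_
            rw [Real.one_rpow]
            refine one_div_le_one_div_of_le (Real.rpow_pos_of_pos hcy _) ?_
            exact Real.rpow_le_rpow hcy.le (hdist x hxy) hdp.le
          · exact zero_le
        have harith : (1 : ℝ) ^ p / (c0 * ‖y‖) ^ ((d : ℝ) + p) * (‖y‖ ^ lam) ^ (d : ℕ) =
            c0 ^ (-((d : ℝ) + p)) * ‖y‖ ^ (lam * (d : ℝ) - ((d : ℝ) + p)) := by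
          have e1 : c0 ^ ((d : ℝ) + p) ≠ 0 := (Real.rpow_pos_of_pos hc0 _).ne'
          have e2 : ‖y‖ ^ ((d : ℝ) + p) ≠ 0 := (Real.rpow_pos_of_pos hy0' _).ne'
          rw [Real.one_rpow, ← Real.rpow_natCast (‖y‖ ^ lam) d,
            ← Real.rpow_mul (norm_nonneg y),
            Real.mul_rpow hc0.le hy0'.le, Real.rpow_neg hc0.le,
            Real.rpow_sub hy0']
          field_simp
        calc (∫⁻ x in B, Gaux d p lam x y)
            ≤ ∫⁻ x in B, (Metric.ball (0 : EuclideanSpace ℝ (Fin d)) (‖y‖ ^ lam)).indicator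
                (fun _ => Cst) x :=
              setLIntegral_mono' measurableSet_ball fun x _ => hptw x
          _ ≤ ∫⁻ x, (Metric.ball (0 : EuclideanSpace ℝ (Fin d)) (‖y‖ ^ lam)).indicator
                (fun _ => Cst) x := setLIntegral_le_lintegral _ _
          _ = Cst * volume (Metric.ball (0 : EuclideanSpace ℝ (Fin d)) (‖y‖ ^ lam)) := by
              rw [lintegral_indicator measurableSet_ball, setLIntegral_const]
          _ = Cst * (ENNReal.ofReal ((‖y‖ ^ lam) ^ (d : ℕ)) *
                volume (Metric.ball (0 : EuclideanSpace ℝ (Fin d)) 1)) := by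
              have hvol := MeasureTheory.Measure.addHaar_ball
                (μ := (volume : Measure (EuclideanSpace ℝ (Fin d)))) 0
                (Real.rpow_nonneg (norm_nonneg y) lam)
              rw [finrank_euclideanSpace_fin] at hvol
              rw [hvol]
          _ = K * ENNReal.ofReal (‖y‖ ^ (lam * (d : ℝ) - ((d : ℝ) + p))) := by
              rw [hCst, hK, ← mul_assoc,
                ← ENNReal.ofReal_mul
                  (le_of_lt (div_pos (Real.rpow_pos_of_pos one_pos p)
                    (Real.rpow_pos_of_pos hcy _))),
                harith,
                ENNReal.ofReal_mul (Real.rpow_pos_of_pos hc0 _).le]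
              ring
    have hfin : (∫⁻ y in B, ∫⁻ x in B, Gaux d p lam x y) < ⊤ := by
      calc (∫⁻ y in B, ∫⁻ x in B, Gaux d p lam x y)
          ≤ ∫⁻ y in B, K * ENNReal.ofReal (‖y‖ ^ (lam * (d : ℝ) - ((d : ℝ) + p))) :=
            setLIntegral_mono' measurableSet_ball hinner
        _ = K * ∫⁻ y in B, ENNReal.ofReal (‖y‖ ^ (lam * (d : ℝ) - ((d : ℝ) + p))) :=
            lintegral_const_mul' _ _
              (by rw [hK]; exact ENNReal.mul_ne_top ofReal_ne_top measure_ball_lt_top.ne)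
        _ < ⊤ := ENNReal.mul_lt_top
            (by rw [hK]; exact ENNReal.mul_lt_top ofReal_lt_top measure_ball_lt_top)
            (lint_rpow_ball d hd hs hRpos)
    calc nlI d p 1 u B ≤ _ := step1
      _ < ⊤ := by rw [step2]; exact ENNReal.add_lt_top.2 ⟨hfin, hfin⟩
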